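/- Let C₀ > 0, A > 0 and D > 0 be real constants, and let E : ℕ → ℝ be a sequence with E(p) ≥ 0 for all p, satisfying E(p) ≤ C₀ · (D/p)^s · A^{s+1} · (s+1)! for all natural numbers s and p with 1 ≤ s and 2s ≤ p. Then there exist constants C > 0 and b > 0 such that E(p) ≤ C · e^{−b p} for every natural number p ≥ 2. -/

import Mathlib

open Real

/-- If a nonnegative sequence `E : ℕ → ℝ` satisfies
`E p ≤ C₀ · (D/p)^s · A^{s+1} · (s+1)!` for all natural numbers `s, p` with `1 ≤ s` and
`2s ≤ p`, then `E` decays exponentially: there are `C > 0` and `b > 0` such that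
`E p ≤ C · e^{−bp}` for all natural numbers `p ≥ 2`. -/
theorem exponential_decay_of_analytic_type_bounds
    (C₀ A D : ℝ) (hC₀ : 0 < C₀) (hA : 0 < A) (hD : 0 < D)
    (E : ℕ → ℝ) (hE_nonneg : ∀ p, 0 ≤ E p)
    (hE : ∀ s p : ℕ, 1 ≤ s → 2 * s ≤ p →
      E p ≤ C₀ * (D / (p : ℝ)) ^ s * A ^ (s + 1) * (Nat.factorial (s + 1) : ℝ)) :
    ∃ C : ℝ, 0 < C ∧ ∃ b : ℝ, 0 < b ∧
      ∀ p : ℕ, 2 ≤ p → E p ≤ C * Real.exp (-b * (p : ℝ)) := by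
  obtain ⟨K, hK2, hKDA⟩ : ∃ K : ℕ, 2 ≤ K ∧ 16 * D * A ≤ (K : ℝ) :=
    ⟨⌈16 * D * A⌉₊ + 2, le_add_self, by
      calc 16 * D * A ≤ (⌈16 * D * A⌉₊ : ℝ) := Nat.le_ceil _
        _ ≤ ((⌈16 * D * A⌉₊ + 2 : ℕ) : ℝ) := by push_cast; linarith⟩
  have hKpos : (0:ℝ) < K := by exact_mod_cast (show 0 < K by omega)
  have hlog4 : 0 < Real.log 4 := Real.log_pos (by norm_num)
  set b : ℝ := Real.log 4 / (2 * (K : ℝ)) with hbdef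
  have hb : 0 < b := div_pos hlog4 (by linarith)
  refine ⟨C₀ * A + 4 * C₀ * D * A ^ 2, by positivity, b, hb, ?_⟩
  intro p hp
  have hppos : (0:ℝ) < p := by exact_mod_cast (show 0 < p by omega)
  rcases lt_or_ge p (2 * K) with hsmall | hlarge
  · -- small p: use s = 1
    have h1 := hE 1 p le_rfl (by omega)
    norm_num [Nat.factorial] at h1
    -- h1 : E p ≤ C₀ * (D / p) * A ^ 2 * 2
    have h2 : E p ≤ C₀ * D * A ^ 2 := by
      have hDp : D / (p : ℝ) ≤ D / 2 :=
        div_le_div_of_nonneg_left hD.le (by norm_num) (by exact_mod_cast hp)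
      nlinarith [mul_le_mul_of_nonneg_left hDp (show (0:ℝ) ≤ 2 * C₀ * A ^ 2 by positivity)]
    have hexp : Real.exp (-(Real.log 4)) ≤ Real.exp (-b * p) := by
      apply Real.exp_le_exp.mpr
      have hple : (p : ℝ) ≤ 2 * K := by exact_mod_cast hsmall.le
      have hbp : b * p ≤ b * (2 * K) := mul_le_mul_of_nonneg_left hple hb.le
      have hb2K : b * (2 * (K : ℝ)) = Real.log 4 := by
        rw [hbdef]; field_simp
      linarith
    have h4 : Real.exp (-(Real.log 4)) = 1 / 4 := by
      rw [Real.exp_neg, Real.exp_log (by norm_num : (0:ℝ) < 4)]; norm_num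
    have hexp4 : (1:ℝ)/4 ≤ Real.exp (-b * p) := by rw [← h4]; exact hexp
    have hpos : 0 ≤ C₀ * A * Real.exp (-b * p) := by positivity
    nlinarith [mul_le_mul_of_nonneg_left hexp4 (show (0:ℝ) ≤ 4 * C₀ * D * A ^ 2 by positivity)]
  · -- large p: use s = p / K
    set s := p / K with hsdef
    have hs1 : 1 ≤ s := (Nat.one_le_div_iff (by omega)).mpr (by omega)
    have hsK : s * K ≤ p := Nat.div_mul_le_self p K
    have hs2p : 2 * s ≤ p := by
      calc 2 * s ≤ K * s := Nat.mul_le_mul_right s hK2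
        _ = s * K := Nat.mul_comm K s
        _ ≤ p := hsK
    -- p ≤ 2 K s
    have hp2Ks : p ≤ 2 * (K * s) := by
      have hmod : K * (p / K) + p % K = p := Nat.div_add_mod p K
      have hmlt : p % K < K := Nat.mod_lt p (by omega)
      rw [← hsdef] at hmod
      set m := K * s
      omega
    have hmain := hE s p hs1 hs2p
    have hfact : ((s + 1).factorial : ℝ) ≤ ((s:ℝ) + 1) ^ (s + 1) := by
      have := Nat.factorial_le_pow (s + 1)
      exact_mod_cast this
    have hKp : K ≤ p := by omega
    have hspK : ((s:ℝ) + 1) * K ≤ 2 * p := by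
      have h1 : (s:ℝ) * K ≤ p := by exact_mod_cast hsK
      have h2 : (K:ℝ) ≤ p := by exact_mod_cast hKp
      nlinarith
    -- the key smallness
    have hx : D * A * ((s:ℝ) + 1) / p ≤ 1 / 8 := by
      rw [div_le_iff₀ hppos]
      nlinarith [mul_le_mul_of_nonneg_left hspK (show (0:ℝ) ≤ D * A by positivity),
        mul_le_mul_of_nonneg_right hKDA hppos.le]
    have hxnn : 0 ≤ D * A * ((s:ℝ) + 1) / p := by positivity
    have hs2 : ((s:ℝ) + 1) ≤ 2 ^ s := by
      have h : s + 1 ≤ 2 ^ s := Nat.lt_two_pow_self (n := s)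
      exact_mod_cast h
    have heq : C₀ * (D / (p:ℝ)) ^ s * A ^ (s + 1) * ((s:ℝ) + 1) ^ (s + 1)
        = C₀ * A * (((s:ℝ) + 1) * (D * A * ((s:ℝ) + 1) / p) ^ s) := by
      rw [div_pow, div_pow, pow_succ A s, pow_succ ((s:ℝ) + 1) s, mul_pow, mul_pow]
      field_simp
    have hstep1 : E p ≤ C₀ * A * (((s:ℝ) + 1) * (D * A * ((s:ℝ) + 1) / p) ^ s) := by
      rw [← heq]
      calc E p ≤ C₀ * (D / (p:ℝ)) ^ s * A ^ (s + 1) * ((s + 1).factorial : ℝ) := hmain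
        _ ≤ C₀ * (D / (p:ℝ)) ^ s * A ^ (s + 1) * ((s:ℝ) + 1) ^ (s + 1) := by
            apply mul_le_mul_of_nonneg_left hfact
            positivity
    have hstep2 : ((s:ℝ) + 1) * (D * A * ((s:ℝ) + 1) / p) ^ s ≤ (1/4 : ℝ) ^ s := by
      calc ((s:ℝ) + 1) * (D * A * ((s:ℝ) + 1) / p) ^ s
          ≤ (2:ℝ) ^ s * (D * A * ((s:ℝ) + 1) / p) ^ s := by
            apply mul_le_mul_of_nonneg_right hs2 (by positivity)
        _ = (2 * (D * A * ((s:ℝ) + 1) / p)) ^ s := by rw [mul_pow]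
        _ ≤ (1/4 : ℝ) ^ s := by
            apply pow_le_pow_left₀ (by positivity)
            linarith
    have hq : ((1:ℝ)/4) ^ s = Real.exp (-((s:ℝ) * Real.log 4)) := by
      rw [Real.exp_neg, Real.exp_nat_mul, Real.exp_log (by norm_num : (0:ℝ) < 4),
        one_div, inv_pow]
    have hexp : Real.exp (-((s:ℝ) * Real.log 4)) ≤ Real.exp (-b * p) := by
      apply Real.exp_le_exp.mpr
      have hcast : (p:ℝ) ≤ 2 * (K * s) := by exact_mod_cast hp2Ks
      rw [hbdef]
      rw [neg_mul, neg_le_neg_iff, div_mul_eq_mul_div,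
        div_le_iff₀ (by linarith : (0:ℝ) < 2 * K)]
      nlinarith
    have hfinal : E p ≤ C₀ * A * Real.exp (-b * p) := by
      calc E p ≤ C₀ * A * (((s:ℝ) + 1) * (D * A * ((s:ℝ) + 1) / p) ^ s) := hstep1
        _ ≤ C₀ * A * ((1/4:ℝ) ^ s) := by
            apply mul_le_mul_of_nonneg_left hstep2 (by positivity)
        _ = C₀ * A * Real.exp (-((s:ℝ) * Real.log 4)) := by rw [hq]
        _ ≤ C₀ * A * Real.exp (-b * p) := by
            apply mul_le_mul_of_nonneg_left hexp (by positivity)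
    have hextra : 0 ≤ 4 * C₀ * D * A ^ 2 * Real.exp (-b * p) := by positivity
    have hexpand : (C₀ * A + 4 * C₀ * D * A ^ 2) * Real.exp (-b * p)
        = C₀ * A * Real.exp (-b * p) + 4 * C₀ * D * A ^ 2 * Real.exp (-b * p) := by ring
    linarith
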